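/- The function f(x) = 3·(sin x)/x − cos x is strictly decreasing on (0, π/2); consequently 6/π < 3·(sin x)/x − cos x < 2 for x ∈ (0, π/2). -/

import Mathlib

open Real Set

lemma key {x : ℝ} (h1 : 0 < x) (h2 : x < π / 2) : x * Real.cos x < Real.sin x := by
  have hc : 0 < Real.cos x := Real.cos_pos_of_mem_Ioo ⟨by linarith [Real.pi_pos], h2⟩
  have ht := Real.lt_tan h1 h2
  rw [Real.tan_eq_sin_div_cos, lt_div_iff₀ hc] at ht
  exact ht

lemma gneg : ∀ x ∈ Ioo 0 (π / 2),
    3 * (x * Real.cos x) - 3 * Real.sin x + x ^ 2 * Real.sin x < 0 := by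
  intro x hx
  have hanti : StrictAntiOn (fun y : ℝ => 3 * (y * Real.cos y) - 3 * Real.sin y + y ^ 2 * Real.sin y)
      (Icc 0 (π / 2)) := by
    apply strictAntiOn_of_deriv_neg (convex_Icc _ _)
    · fun_prop
    · intro y hy
      rw [interior_Icc] at hy
      have H := ((((hasDerivAt_id y).mul (Real.hasDerivAt_cos y)).const_mul 3).sub
        ((Real.hasDerivAt_sin y).const_mul 3)).add
        ((hasDerivAt_pow 2 y).mul (Real.hasDerivAt_sin y))
      have H' : HasDerivAt (fun y : ℝ => 3 * (y * Real.cos y) - 3 * Real.sin y + y ^ 2 * Real.sin y)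
          (y * (y * Real.cos y - Real.sin y)) y := by
        refine H.congr_deriv ?_
        simp only [id_eq]
        push_cast
        ring
      rw [H'.deriv]
      have hk := key hy.1 hy.2
      nlinarith [hy.1]
  have h0 : (0 : ℝ) ∈ Icc 0 (π / 2) := ⟨le_refl 0, by positivity⟩
  have hxm : x ∈ Icc 0 (π / 2) := ⟨hx.1.le, hx.2.le⟩
  have := hanti h0 hxm hx.1
  simpa using this

lemma hpos : ∀ x ∈ Ioo 0 (π / 2),
    0 < 2 * x - 3 * Real.sin x + x * Real.cos x := by
  intro x hx
  have h2mono : StrictMonoOn (fun y : ℝ => 2 - 2 * Real.cos y - y * Real.sin y)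
      (Icc 0 (π / 2)) := by
    apply strictMonoOn_of_deriv_pos (convex_Icc _ _)
    · fun_prop
    · intro y hy
      rw [interior_Icc] at hy
      have H := ((hasDerivAt_const y (2:ℝ)).sub ((Real.hasDerivAt_cos y).const_mul 2)).sub
        ((hasDerivAt_id y).mul (Real.hasDerivAt_sin y))
      have H' : HasDerivAt (fun y : ℝ => 2 - 2 * Real.cos y - y * Real.sin y)
          (Real.sin y - y * Real.cos y) y := by
        refine H.congr_deriv ?_
        simp only [id_eq]
        ring
      rw [H'.deriv]
      have hk := key hy.1 hy.2
      linarith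
  have h2pos : ∀ y ∈ Ioo 0 (π / 2), 0 < 2 - 2 * Real.cos y - y * Real.sin y := by
    intro y hy
    have := h2mono ⟨le_refl 0, by positivity⟩ ⟨hy.1.le, hy.2.le⟩ hy.1
    simpa using this
  have hmono : StrictMonoOn (fun y : ℝ => 2 * y - 3 * Real.sin y + y * Real.cos y)
      (Icc 0 (π / 2)) := by
    apply strictMonoOn_of_deriv_pos (convex_Icc _ _)
    · fun_prop
    · intro y hy
      rw [interior_Icc] at hy
      have H := (((hasDerivAt_id y).const_mul 2).sub ((Real.hasDerivAt_sin y).const_mul 3)).add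
        ((hasDerivAt_id y).mul (Real.hasDerivAt_cos y))
      have H' : HasDerivAt (fun y : ℝ => 2 * y - 3 * Real.sin y + y * Real.cos y)
          (2 - 2 * Real.cos y - y * Real.sin y) y := by
        refine H.congr_deriv ?_
        simp only [id_eq]
        ring
      rw [H'.deriv]
      exact h2pos y hy
  have := hmono ⟨le_refl 0, by positivity⟩ ⟨hx.1.le, hx.2.le⟩ hx.1
  simpa using this

lemma fanti : StrictAntiOn (fun x : ℝ => 3 * (Real.sin x / x) - Real.cos x) (Ioc 0 (π / 2)) := by
  apply strictAntiOn_of_deriv_neg (convex_Ioc _ _)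
  · apply ContinuousOn.sub
    · exact continuousOn_const.mul
        (Real.continuous_sin.continuousOn.div continuousOn_id fun x hx => ne_of_gt hx.1)
    · exact Real.continuous_cos.continuousOn
  · intro x hx
    rw [interior_Ioc] at hx
    have hx0 : (0:ℝ) < x := hx.1
    have H := (((Real.hasDerivAt_sin x).div (hasDerivAt_id x) (ne_of_gt hx0)).const_mul 3).sub
      (Real.hasDerivAt_cos x)
    have H' : HasDerivAt (fun x : ℝ => 3 * (Real.sin x / x) - Real.cos x)
        ((3 * (x * Real.cos x) - 3 * Real.sin x + x ^ 2 * Real.sin x) / x ^ 2) x := by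
      refine H.congr_deriv ?_
      simp only [id_eq]
      field_simp
      ring
    rw [H'.deriv]
    exact div_neg_of_neg_of_pos (gneg x hx) (by positivity)

theorem stmt16 :
    StrictAntiOn (fun x : ℝ => 3 * (Real.sin x / x) - Real.cos x) (Ioo 0 (π / 2)) ∧
    (∀ x : ℝ, x ∈ Ioo 0 (π / 2) →
      6 / π < 3 * (Real.sin x / x) - Real.cos x ∧
      3 * (Real.sin x / x) - Real.cos x < 2) := by
  constructor
  · exact fanti.mono Ioo_subset_Ioc_self
  · intro x hx
    have hx0 : (0:ℝ) < x := hx.1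
    have hpi : (0:ℝ) < π := Real.pi_pos
    constructor
    · have h := fanti (Ioo_subset_Ioc_self hx) ⟨by positivity, le_refl _⟩ hx.2
      simp only [Real.sin_pi_div_two, Real.cos_pi_div_two] at h
      have : 3 * (1 / (π / 2)) - 0 = 6 / π := by field_simp; norm_num
      linarith [this ▸ h]
    · have h := hpos x hx
      have h2 : 3 * (Real.sin x / x) = 3 * Real.sin x / x := by ring
      rw [h2, sub_lt_iff_lt_add, div_lt_iff₀ hx0]
      nlinarith
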